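/- Let X_i, Y_i, Z_i (1 ≤ i ≤ n) be 3n mutually independent, all values a.s. distinct, with X_i, Y_i, Z_i ~ F_i nonnegative. Let Y* = max_i Y_i and fix a permutation π. The stopping rule that hires the first (in order π) index π(t) such that X_{π(t)} > Y*, all earlier X_{π(s)} < Y* for s < t, and Z_{π(s)} < Y* for all s ≥ t, hires a candidate whose expected value is at least (1/9)·E[max_i X_i]. -/

import Mathlib

open Finset MeasureTheory ProbabilityTheory
open scoped Classical ENNReal

namespace Stmt13Aux

variable {n : ℕ}

/-- Row-permuting equivalence of the index set: within each column `i`, permute the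
three rows by `g i`. -/
def eg (g : Fin n → Equiv.Perm (Fin 3)) : (Fin 3 × Fin n) ≃ (Fin 3 × Fin n) where
  toFun q := (g q.2 q.1, q.2)
  invFun q := ((g q.2).symm q.1, q.2)
  left_inv q := by simp
  right_inv q := by simp

/-- The good event: the overall strict maximum sits in row 0 (an `X`) and the overall
strict second maximum sits in row 1 (a `Y`). -/
def Aset (n : ℕ) : Set (Fin 3 × Fin n → ℝ) :=
  {v | ∃ i j : Fin n, (∀ q, q ≠ ((0 : Fin 3), i) → v q < v (0, i)) ∧
        (∀ q, q ≠ ((0 : Fin 3), i) → q ≠ ((1 : Fin 3), j) → v q < v (1, j))}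

/-- Row-1 maximum. -/
noncomputable def Ymax (n : ℕ) : (Fin 3 × Fin n → ℝ) → ℝ := fun v => ⨆ k : Fin n, v (1, k)

/-- Global maximum. -/
noncomputable def Mx (n : ℕ) : (Fin 3 × Fin n → ℝ) → ℝ := fun v => ⨆ q, v q

/-- The value hired by the stopping rule. -/
noncomputable def F (n : ℕ) (π : Equiv.Perm (Fin n)) : (Fin 3 × Fin n → ℝ) → ℝ := fun v =>
  ∑ t : Fin n,
    (if (Ymax n v < v (0, π t) ∧
         (∀ s : Fin n, s < t → v (0, π s) < Ymax n v) ∧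
         (∀ s : Fin n, t ≤ s → v (2, π s) < Ymax n v))
     then v (0, π t) else 0)

lemma ms_imp {α : Type*} [MeasurableSpace α] {P : Prop} {S : Set α} (h : MeasurableSet S) :
    MeasurableSet {v | P → v ∈ S} := by
  by_cases hP : P
  · have : {v | P → v ∈ S} = S := by ext v; simp [hP]
    rw [this]; exact h
  · have : {v | P → v ∈ S} = Set.univ := by ext v; simp [hP]
    rw [this]; exact MeasurableSet.univ

lemma measurableSet_Aset : MeasurableSet (Aset n) := by
  have : Aset n = ⋃ i : Fin n, ⋃ j : Fin n,
      ((⋂ q : Fin 3 × Fin n, {v : Fin 3 × Fin n → ℝ | q ≠ ((0 : Fin 3), i) → v q < v (0, i)}) ∩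
       (⋂ q : Fin 3 × Fin n,
         {v : Fin 3 × Fin n → ℝ | q ≠ ((0 : Fin 3), i) → q ≠ ((1 : Fin 3), j) → v q < v (1, j)})) := by
    ext v
    simp only [Aset, Set.mem_setOf_eq, Set.mem_iUnion, Set.mem_inter_iff, Set.mem_iInter]
  rw [this]
  refine MeasurableSet.iUnion fun i => MeasurableSet.iUnion fun j => MeasurableSet.inter ?_ ?_
  · exact MeasurableSet.iInter fun q =>
      ms_imp (measurableSet_lt (measurable_pi_apply q) (measurable_pi_apply _))
  · exact MeasurableSet.iInter fun q =>
      ms_imp (ms_imp (measurableSet_lt (measurable_pi_apply q) (measurable_pi_apply _)))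

lemma mYmax : Measurable (Ymax n) :=
  Measurable.iSup fun k => measurable_pi_apply ((1 : Fin 3), k)

lemma mMx : Measurable (Mx n) :=
  Measurable.iSup fun q => measurable_pi_apply q

lemma mF (π : Equiv.Perm (Fin n)) : Measurable (F n π) := by
  apply Finset.measurable_sum
  intro t _
  have hc : MeasurableSet {v : Fin 3 × Fin n → ℝ | Ymax n v < v (0, π t) ∧
      (∀ s : Fin n, s < t → v (0, π s) < Ymax n v) ∧
      (∀ s : Fin n, t ≤ s → v (2, π s) < Ymax n v)} := by
    have : {v : Fin 3 × Fin n → ℝ | Ymax n v < v (0, π t) ∧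
        (∀ s : Fin n, s < t → v (0, π s) < Ymax n v) ∧
        (∀ s : Fin n, t ≤ s → v (2, π s) < Ymax n v)} =
        {v : Fin 3 × Fin n → ℝ | Ymax n v < v (0, π t)} ∩
        ((⋂ s : Fin n, {v : Fin 3 × Fin n → ℝ | s < t → v (0, π s) < Ymax n v}) ∩
         (⋂ s : Fin n, {v : Fin 3 × Fin n → ℝ | t ≤ s → v (2, π s) < Ymax n v})) := by
      ext v
      simp only [Set.mem_setOf_eq, Set.mem_inter_iff, Set.mem_iInter]
    rw [this]
    refine (measurableSet_lt mYmax (measurable_pi_apply _)).inter (MeasurableSet.inter ?_ ?_)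
    · exact MeasurableSet.iInter fun s =>
        ms_imp (measurableSet_lt (measurable_pi_apply _) mYmax)
    · exact MeasurableSet.iInter fun s =>
        ms_imp (measurableSet_lt (measurable_pi_apply _) mYmax)
  exact Measurable.ite hc (measurable_pi_apply _) measurable_const

lemma iSup_comp_equiv {ι ι' : Type*} (v : ι → ℝ) (e : ι' ≃ ι) :
    ⨆ q, v (e q) = ⨆ q, v q := by
  have h : Set.range (fun q => v (e q)) = Set.range v := by
    rw [show (fun q => v (e q)) = v ∘ e from rfl, Set.range_comp, Equiv.range_eq_univ,
      Set.image_univ]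
  show sSup (Set.range fun q => v (e q)) = sSup (Set.range v)
  rw [h]

lemma exists_ciSup_eq {ι : Type*} [Fintype ι] [Nonempty ι] (f : ι → ℝ) :
    ∃ k, (⨆ j, f j) = f k ∧ ∀ j, f j ≤ f k := by
  obtain ⟨k, hk⟩ := Finite.exists_max f
  exact ⟨k, le_antisymm (ciSup_le hk) (le_ciSup (Set.finite_range f).bddAbove k), hk⟩

lemma exists_strict_max {ι : Type*} [Fintype ι] [Nonempty ι] (v : ι → ℝ)
    (hv : Function.Injective v) : ∃ q1, ∀ q, q ≠ q1 → v q < v q1 := by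
  obtain ⟨q1, -, h⟩ := Finset.exists_max_image univ v univ_nonempty
  exact ⟨q1, fun q hq => lt_of_le_of_ne (h q (mem_univ q)) (fun he => hq (hv he))⟩

lemma exists_strict_second {ι : Type*} [Fintype ι] [DecidableEq ι] (v : ι → ℝ) (hv : Function.Injective v)
    (q1 : ι) (hne : (univ.erase q1).Nonempty) :
    ∃ q2, q2 ≠ q1 ∧ ∀ q, q ≠ q1 → q ≠ q2 → v q < v q2 := by
  obtain ⟨q2, hq2mem, h⟩ := Finset.exists_max_image (univ.erase q1) v hne
  exact ⟨q2, (Finset.mem_erase.1 hq2mem).1, fun q hq hq2 =>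
    lt_of_le_of_ne (h q (Finset.mem_erase.2 ⟨hq, mem_univ q⟩)) (fun he => hq2 (hv he))⟩

lemma strict_max_unique {ι : Type*} (v : ι → ℝ) {a b : ι}
    (ha : ∀ q, q ≠ a → v q < v a) (hb : ∀ q, q ≠ b → v q < v b) : a = b := by
  by_contra h
  exact lt_asymm (ha b (fun h' => h h'.symm)) (hb a h)

lemma strict_second_unique {ι : Type*} (v : ι → ℝ) {a b b' : ι} (hb1 : b ≠ a) (hb'1 : b' ≠ a)
    (hb : ∀ q, q ≠ a → q ≠ b → v q < v b) (hb' : ∀ q, q ≠ a → q ≠ b' → v q < v b') : b = b' := by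
  by_contra h
  exact lt_asymm (hb b' hb'1 (fun h' => h h'.symm)) (hb' b hb1 h)

/-- Characterization: the transformed array `v ∘ eg g` lies in the good event iff
`g` sends row `0` (at the max column) to the max row and row `1` (at the second-max
column) to the second-max row. -/
lemma mem_Aset_comp_iff (v : Fin 3 × Fin n → ℝ) {q1 q2 : Fin 3 × Fin n} (hq21 : q2 ≠ q1)
    (h1 : ∀ q, q ≠ q1 → v q < v q1) (h2 : ∀ q, q ≠ q1 → q ≠ q2 → v q < v q2)
    (g : Fin n → Equiv.Perm (Fin 3)) :
    (v ∘ (eg g)) ∈ Aset n ↔ (g q1.2 0 = q1.1 ∧ g q2.2 1 = q2.1) := by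
  set e := eg g with he
  have hw1 : ∀ p, p ≠ e.symm q1 → (v ∘ e) p < (v ∘ e) (e.symm q1) := by
    intro p hp
    have : e p ≠ q1 := fun h => hp (by rw [← h, Equiv.symm_apply_apply])
    simpa [Equiv.apply_symm_apply] using h1 (e p) this
  have hw2 : ∀ p, p ≠ e.symm q1 → p ≠ e.symm q2 → (v ∘ e) p < (v ∘ e) (e.symm q2) := by
    intro p hp hp2
    have h1' : e p ≠ q1 := fun h => hp (by rw [← h, Equiv.symm_apply_apply])
    have h2' : e p ≠ q2 := fun h => hp2 (by rw [← h, Equiv.symm_apply_apply])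
    simpa [Equiv.apply_symm_apply] using h2 (e p) h1' h2'
  constructor
  · rintro ⟨i, j, hA1, hA2⟩
    have hmax : ((0 : Fin 3), i) = e.symm q1 := strict_max_unique (v ∘ e) hA1 hw1
    have h10 : ((1 : Fin 3) = (0 : Fin 3)) → False := by decide
    have hij : ((1 : Fin 3), j) ≠ ((0 : Fin 3), i) := by
      intro h; exact h10 (congrArg Prod.fst h)
    have hsymm_ne : e.symm q2 ≠ ((0 : Fin 3), i) := by
      rw [hmax]; exact fun h => hq21 (e.symm.injective h)
    have hsec : ((1 : Fin 3), j) = e.symm q2 := by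
      refine strict_second_unique (v ∘ e) hij hsymm_ne ?_ ?_
      · exact hA2
      · intro q hq hq2; exact hw2 q (by rw [← hmax] at *; exact hmax ▸ hq) hq2
    have hmax' : e ((0 : Fin 3), i) = q1 := by rw [hmax, Equiv.apply_symm_apply]
    have hsec' : e ((1 : Fin 3), j) = q2 := by rw [hsec, Equiv.apply_symm_apply]
    have hei : (g i 0, i) = q1 := hmax'
    have hej : (g j 1, j) = q2 := hsec'
    have hi2 : i = q1.2 := congrArg Prod.snd hei
    have hj2 : j = q2.2 := congrArg Prod.snd hej
    constructor
    · rw [← hi2]; exact congrArg Prod.fst hei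
    · rw [← hj2]; exact congrArg Prod.fst hej
  · rintro ⟨hg1, hg2⟩
    have hei : e ((0 : Fin 3), q1.2) = q1 := by
      show (g q1.2 0, q1.2) = q1
      rw [hg1]
    have hej : e ((1 : Fin 3), q2.2) = q2 := by
      show (g q2.2 1, q2.2) = q2
      rw [hg2]
    refine ⟨q1.2, q2.2, ?_, ?_⟩
    · intro q hq
      have : e q ≠ q1 := by rw [← hei]; exact fun h => hq (e.injective h)
      have := h1 (e q) this
      simpa [Function.comp, hei] using this
    · intro q hq hq'
      have hne1 : e q ≠ q1 := by rw [← hei]; exact fun h => hq (e.injective h)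
      have hne2 : e q ≠ q2 := by rw [← hej]; exact fun h => hq' (e.injective h)
      have := h2 (e q) hne1 hne2
      simpa [Function.comp, hej] using this

lemma card_perm3_0 : ∀ r : Fin 3,
    2 ≤ (univ.filter (fun σ : Equiv.Perm (Fin 3) => σ 0 = r)).card := by decide

lemma card_perm3_1 : ∀ r : Fin 3,
    2 ≤ (univ.filter (fun σ : Equiv.Perm (Fin 3) => σ 1 = r)).card := by decide

lemma card_perm3_01 : ∀ r1 r2 : Fin 3, r1 ≠ r2 →
    1 ≤ (univ.filter (fun σ : Equiv.Perm (Fin 3) => σ 0 = r1 ∧ σ 1 = r2)).card := by decide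

lemma card_perm3 : (univ : Finset (Equiv.Perm (Fin 3))).card = 6 := by decide

/-- The counting bound: at least a `1/9` fraction of all row-permutation tuples place
the max in row 0 and the second max in row 1. -/
lemma count_bound (i1 i2 : Fin n) (r1 r2 : Fin 3) (hne : i1 = i2 → r1 ≠ r2) :
    6 ^ n ≤ 9 * (univ.filter
      (fun g : Fin n → Equiv.Perm (Fin 3) => g i1 0 = r1 ∧ g i2 1 = r2)).card := by
  set S : Fin n → Finset (Equiv.Perm (Fin 3)) := fun i =>
    univ.filter (fun σ => (i = i1 → σ 0 = r1) ∧ (i = i2 → σ 1 = r2)) with hS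
  have hfilter : univ.filter
      (fun g : Fin n → Equiv.Perm (Fin 3) => g i1 0 = r1 ∧ g i2 1 = r2) =
      Fintype.piFinset S := by
    ext g
    simp only [Finset.mem_filter, Finset.mem_univ, true_and, Fintype.mem_piFinset, hS]
    constructor
    · rintro ⟨ha, hb⟩ i; exact ⟨fun hi => hi ▸ ha, fun hi => hi ▸ hb⟩
    · intro h; exact ⟨(h i1).1 rfl, (h i2).2 rfl⟩
  rw [hfilter, Fintype.card_piFinset]
  set m : Fin n → ℕ := fun i =>
    if i = i1 then (if i1 = i2 then 9 else 3) else if i = i2 then 3 else 1 with hm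
  have hprodm : ∏ i, m i = 9 := by
    by_cases h12 : i1 = i2
    · have hmeq : m = fun i => if i = i1 then 9 else 1 := by
        funext i
        by_cases h : i = i1
        · subst h; simp [hm, h12]
        · have h2 : i ≠ i2 := by rw [← h12]; exact h
          simp [hm, h, h2]
      rw [hmeq, Finset.prod_ite_eq' univ i1 (fun _ => 9)]
      simp
    · have hmeq : m = fun i => (if i = i1 then 3 else 1) * (if i = i2 then 3 else 1) := by
        funext i
        by_cases h : i = i1
        · subst h; simp [hm, h12]
        · by_cases h' : i = i2
          · subst h'; simp [hm, h]
          · simp [hm, h, h']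
      rw [hmeq, Finset.prod_mul_distrib, Finset.prod_ite_eq' univ i1 (fun _ => 3),
        Finset.prod_ite_eq' univ i2 (fun _ => 3)]
      simp
  have hfac : ∀ i, 6 ≤ m i * (S i).card := by
    intro i
    by_cases h : i = i1
    · subst h
      by_cases h12 : i = i2
      · subst h12
        have hSi : S i = univ.filter (fun σ : Equiv.Perm (Fin 3) => σ 0 = r1 ∧ σ 1 = r2) := by
          ext σ; simp [hS]
        have hr : r1 ≠ r2 := hne rfl
        have h1 : 1 ≤ (S i).card := by rw [hSi]; exact card_perm3_01 r1 r2 hr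
        have hmi : m i = 9 := by simp [hm]
        rw [hmi]; omega
      · have hSi : S i = univ.filter (fun σ : Equiv.Perm (Fin 3) => σ 0 = r1) := by
          ext σ; simp [hS, h12]
        have h1 : 2 ≤ (S i).card := by rw [hSi]; exact card_perm3_0 r1
        have hmi : m i = 3 := by simp [hm, h12]
        rw [hmi]; omega
    · by_cases h' : i = i2
      · subst h'
        have hSi : S i = univ.filter (fun σ : Equiv.Perm (Fin 3) => σ 1 = r2) := by
          ext σ; simp [hS, h]
        have h1 : 2 ≤ (S i).card := by rw [hSi]; exact card_perm3_1 r2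
        have hmi : m i = 3 := by simp [hm, h]
        rw [hmi]; omega
      · have hSi : S i = univ := by
          ext σ; simp [hS, h, h']
        have hmi : m i = 1 := by simp [hm, h, h']
        rw [hmi, hSi, card_perm3]
  calc 6 ^ n = ∏ _i : Fin n, 6 := by
        rw [Finset.prod_const, Finset.card_univ, Fintype.card_fin]
    _ ≤ ∏ i, (m i * (S i).card) := Finset.prod_le_prod' fun i _ => hfac i
    _ = (∏ i, m i) * ∏ i, (S i).card := Finset.prod_mul_distrib
    _ = 9 * ∏ i, (S i).card := by rw [hprodm]

/-- Pointwise symmetrization bound, for injective arrays. -/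
lemma sum_ind_bound (hn : 0 < n) (v : Fin 3 × Fin n → ℝ) (hv : Function.Injective v) :
    (6 : ℝ≥0∞) ^ n ≤ 9 * ∑ g : Fin n → Equiv.Perm (Fin 3),
      (Aset n).indicator (1 : (Fin 3 × Fin n → ℝ) → ℝ≥0∞) (v ∘ eg g) := by
  haveI : Nonempty (Fin n) := ⟨⟨0, hn⟩⟩
  obtain ⟨q1, h1⟩ := exists_strict_max v hv
  have herase : (univ.erase q1).Nonempty := by
    rw [← Finset.card_pos, Finset.card_erase_of_mem (mem_univ q1), Finset.card_univ]
    have : 3 ≤ Fintype.card (Fin 3 × Fin n) := by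
      rw [Fintype.card_prod, Fintype.card_fin, Fintype.card_fin]
      nlinarith [hn]
    omega
  obtain ⟨q2, hq21, h2⟩ := exists_strict_second v hv q1 herase
  have hsum : ∑ g : Fin n → Equiv.Perm (Fin 3),
      (Aset n).indicator (1 : (Fin 3 × Fin n → ℝ) → ℝ≥0∞) (v ∘ eg g) =
      ((univ.filter (fun g : Fin n → Equiv.Perm (Fin 3) =>
        g q1.2 0 = q1.1 ∧ g q2.2 1 = q2.1)).card : ℝ≥0∞) := by
    calc ∑ g : Fin n → Equiv.Perm (Fin 3),
        (Aset n).indicator (1 : (Fin 3 × Fin n → ℝ) → ℝ≥0∞) (v ∘ eg g)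
        = ∑ g : Fin n → Equiv.Perm (Fin 3),
            (if (g q1.2 0 = q1.1 ∧ g q2.2 1 = q2.1) then (1 : ℝ≥0∞) else 0) := by
          refine Finset.sum_congr rfl fun g _ => ?_
          rw [Set.indicator_apply]
          exact if_congr (mem_Aset_comp_iff v hq21 h1 h2 g) rfl rfl
      _ = _ := by rw [Finset.sum_boole]
  rw [hsum]
  have hcount := count_bound q1.2 q2.2 q1.1 q2.1 (by
    intro h12 hr
    exact hq21 (Prod.ext hr.symm h12.symm))
  calc (6 : ℝ≥0∞) ^ n = ((6 ^ n : ℕ) : ℝ≥0∞) := by push_cast; ring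
    _ ≤ ((9 * (univ.filter (fun g : Fin n → Equiv.Perm (Fin 3) =>
          g q1.2 0 = q1.1 ∧ g q2.2 1 = q2.1)).card : ℕ) : ℝ≥0∞) := by
        exact_mod_cast hcount
    _ = _ := by push_cast; ring

/-- The pointwise algorithm lower bound on the good event. -/
lemma alg_ge (hn : 0 < n) (π : Equiv.Perm (Fin n)) (v : Fin 3 × Fin n → ℝ)
    (hpos : ∀ q, 0 ≤ v q) (hA : v ∈ Aset n) : Mx n v ≤ F n π v := by
  haveI : Nonempty (Fin n) := ⟨⟨0, hn⟩⟩
  obtain ⟨i, j, h1, h2⟩ := hA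
  set t0 := π.symm i with ht0
  have hπt0 : π t0 = i := Equiv.apply_symm_apply π i
  have hbddY : BddAbove (Set.range fun k : Fin n => v (1, k)) :=
    (Set.finite_range _).bddAbove
  have hYle : ∀ k, v (1, k) ≤ Ymax n v := fun k => le_ciSup hbddY k
  have hY1 : Ymax n v < v (0, i) := by
    obtain ⟨k0, hk0, -⟩ := exists_ciSup_eq (fun k : Fin n => v (1, k))
    rw [Ymax, hk0]
    have h10 : ((1 : Fin 3) = (0 : Fin 3)) → False := by decide
    exact h1 (1, k0) (fun h => h10 (congrArg Prod.fst h))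
  have hYj : v (1, j) ≤ Ymax n v := hYle j
  have hcond : Ymax n v < v (0, π t0) ∧
      (∀ s : Fin n, s < t0 → v (0, π s) < Ymax n v) ∧
      (∀ s : Fin n, t0 ≤ s → v (2, π s) < Ymax n v) := by
    refine ⟨by rw [hπt0]; exact hY1, ?_, ?_⟩
    · intro s hs
      have hsne : π s ≠ i := by
        intro h
        exact absurd (π.injective (h.trans hπt0.symm)) (ne_of_lt hs)
      have h01 : ((0 : Fin 3) = (1 : Fin 3)) → False := by decide
      have : v (0, π s) < v (1, j) := by
        refine h2 (0, π s) ?_ ?_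
        · intro h; exact hsne (congrArg Prod.snd h)
        · intro h; exact h01 (congrArg Prod.fst h)
      exact lt_of_lt_of_le this hYj
    · intro s _
      have h20 : ((2 : Fin 3) = (0 : Fin 3)) → False := by decide
      have h21 : ((2 : Fin 3) = (1 : Fin 3)) → False := by decide
      have : v (2, π s) < v (1, j) := by
        refine h2 (2, π s) ?_ ?_
        · intro h; exact h20 (congrArg Prod.fst h)
        · intro h; exact h21 (congrArg Prod.fst h)
      exact lt_of_lt_of_le this hYj
  have hMx : Mx n v = v (0, i) := by
    refine le_antisymm (ciSup_le fun q => ?_) (le_ciSup (Set.finite_range v).bddAbove _)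
    by_cases hq : q = ((0 : Fin 3), i)
    · rw [hq]
    · exact (h1 q hq).le
  rw [hMx]
  have hterm : ∀ t : Fin n, t ∈ (univ : Finset (Fin n)) →
      0 ≤ (if (Ymax n v < v (0, π t) ∧
           (∀ s : Fin n, s < t → v (0, π s) < Ymax n v) ∧
           (∀ s : Fin n, t ≤ s → v (2, π s) < Ymax n v))
       then v (0, π t) else 0) := by
    intro t _
    split_ifs
    · exact hpos _
    · exact le_refl 0
  calc v (0, i) = (if (Ymax n v < v (0, π t0) ∧
           (∀ s : Fin n, s < t0 → v (0, π s) < Ymax n v) ∧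
           (∀ s : Fin n, t0 ≤ s → v (2, π s) < Ymax n v))
       then v (0, π t0) else 0) := by rw [if_pos hcond, hπt0]
    _ ≤ F n π v := Finset.single_le_sum hterm (mem_univ t0)

/-- Invariance of the product measure under within-column row permutations,
at the level of lower integrals. -/
lemma lintegral_pi_comp_equiv {ι : Type*} [Fintype ι] (ν : ι → Measure ℝ)
    [∀ i, SigmaFinite (ν i)] (e : ι ≃ ι) (hν : ∀ i, ν (e i) = ν i)
    {g : (ι → ℝ) → ℝ≥0∞} (hg : Measurable g) :
    ∫⁻ v, g (v ∘ e) ∂Measure.pi ν = ∫⁻ v, g v ∂Measure.pi ν := by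
  have hfam : (fun i => ν (e.symm i)) = ν := funext fun i => by
    rw [← hν (e.symm i), Equiv.apply_symm_apply]
  have hmp := MeasureTheory.measurePreserving_piCongrLeft (α := fun _ : ι => ℝ) ν e.symm
  have hT : ∀ v : ι → ℝ,
      (MeasurableEquiv.piCongrLeft (fun _ : ι => ℝ) e.symm) v = v ∘ e := by
    intro v; funext j
    have h := MeasurableEquiv.piCongrLeft_apply_apply (β := fun _ : ι => ℝ) e.symm v (e j)
    simpa using h
  have hmeq : Measure.pi (fun i => ν (e.symm i)) = Measure.pi ν := by rw [hfam]
  calc ∫⁻ v, g (v ∘ e) ∂Measure.pi ν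
      = ∫⁻ v, g ((MeasurableEquiv.piCongrLeft (fun _ : ι => ℝ) e.symm) v)
          ∂Measure.pi (fun i => ν (e.symm i)) := by
        rw [hmeq]; exact lintegral_congr fun v => by rw [hT]
    _ = ∫⁻ v, g v ∂Measure.pi ν := hmp.lintegral_comp hg

/-- The joint distribution of finitely many independent random variables is the
product of their distributions. -/
lemma map_eq_pi {Ω ι : Type*} [MeasurableSpace Ω] [Fintype ι] (μ : Measure Ω)
    [IsProbabilityMeasure μ] (f : ι → Ω → ℝ) (hm : ∀ i, Measurable (f i))
    (h : iIndepFun f μ) :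
    μ.map (fun ω i => f i ω) = Measure.pi (fun i => μ.map (f i)) := by
  haveI : ∀ i, IsProbabilityMeasure (μ.map (f i)) := fun i =>
    Measure.isProbabilityMeasure_map (hm i).aemeasurable
  refine (Measure.pi_eq fun s hs => ?_).symm
  rw [Measure.map_apply (measurable_pi_lambda _ hm) (MeasurableSet.univ_pi hs)]
  have hpre : (fun ω i => f i ω) ⁻¹' (Set.univ.pi s) = ⋂ i, f i ⁻¹' s i := by
    ext ω; simp [Set.mem_pi]
  rw [hpre, h.meas_iInter fun i => ⟨s i, hs i, rfl⟩]
  exact Finset.prod_congr rfl fun i _ => (Measure.map_apply (hm i) (hs i)).symm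

/-- The key inequality on the canonical product space. -/
lemma key (hn : 0 < n) (π : Equiv.Perm (Fin n)) (ν : Fin 3 × Fin n → Measure ℝ)
    [∀ q, IsProbabilityMeasure (ν q)] (hcol : ∀ (r r' : Fin 3) i, ν (r, i) = ν (r', i))
    (hpos : ∀ᵐ v ∂Measure.pi ν, ∀ q, 0 ≤ v q)
    (hinj : ∀ᵐ v ∂Measure.pi ν, Function.Injective v) :
    ∫⁻ v, ENNReal.ofReal (Mx n v) ∂Measure.pi ν ≤
      9 * ∫⁻ v, ENNReal.ofReal (F n π v) ∂Measure.pi ν := by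
  haveI : Nonempty (Fin n) := ⟨⟨0, hn⟩⟩
  set P := Measure.pi ν with hP
  set ofM : (Fin 3 × Fin n → ℝ) → ℝ≥0∞ := fun v => ENNReal.ofReal (Mx n v) with hofM
  have mofM : Measurable ofM := ENNReal.measurable_ofReal.comp mMx
  set G : (Fin 3 × Fin n → ℝ) → ℝ≥0∞ :=
    fun v => (Aset n).indicator (1 : (Fin 3 × Fin n → ℝ) → ℝ≥0∞) v * ofM v with hG
  have mInd : Measurable ((Aset n).indicator (1 : (Fin 3 × Fin n → ℝ) → ℝ≥0∞)) :=
    measurable_const.indicator measurableSet_Aset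
  have mG : Measurable G := mInd.mul mofM
  have hcomp_meas : ∀ g : Fin n → Equiv.Perm (Fin 3),
      Measurable (fun v : Fin 3 × Fin n → ℝ => v ∘ eg g) := fun g =>
    measurable_pi_lambda _ fun q => measurable_pi_apply (eg g q)
  have hνeg : ∀ (g : Fin n → Equiv.Perm (Fin 3)) (q : Fin 3 × Fin n), ν (eg g q) = ν q := by
    intro g q
    show ν (g q.2 q.1, q.2) = ν q
    exact hcol _ q.1 q.2
  have hinv : ∀ g : Fin n → Equiv.Perm (Fin 3),
      ∫⁻ v, (Aset n).indicator (1 : (Fin 3 × Fin n → ℝ) → ℝ≥0∞) (v ∘ eg g) * ofM v ∂P =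
        ∫⁻ v, G v ∂P := by
    intro g
    have hMe : ∀ v : Fin 3 × Fin n → ℝ, Mx n (v ∘ eg g) = Mx n v := fun v =>
      iSup_comp_equiv v (eg g)
    have hGe : ∀ v : Fin 3 × Fin n → ℝ,
        G (v ∘ eg g) = (Aset n).indicator (1 : (Fin 3 × Fin n → ℝ) → ℝ≥0∞) (v ∘ eg g) * ofM v := by
      intro v
      simp only [hG, hofM, hMe v]
    calc ∫⁻ v, (Aset n).indicator (1 : (Fin 3 × Fin n → ℝ) → ℝ≥0∞) (v ∘ eg g) * ofM v ∂P
        = ∫⁻ v, G (v ∘ eg g) ∂P := lintegral_congr fun v => (hGe v).symm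
      _ = ∫⁻ v, G v ∂P := lintegral_pi_comp_equiv ν (eg g) (hνeg g) mG
  have hpt : ∀ᵐ v ∂P, (6 : ℝ≥0∞) ^ n * ofM v ≤
      9 * ∑ g : Fin n → Equiv.Perm (Fin 3),
        ((Aset n).indicator (1 : (Fin 3 × Fin n → ℝ) → ℝ≥0∞) (v ∘ eg g) * ofM v) := by
    refine hinj.mono fun v hv => ?_
    rw [← Finset.sum_mul, ← mul_assoc]
    exact mul_le_mul_left (sum_ind_bound hn v hv) (ofM v)
  have hmeas_each : ∀ g : Fin n → Equiv.Perm (Fin 3), Measurable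
      (fun v => (Aset n).indicator (1 : (Fin 3 × Fin n → ℝ) → ℝ≥0∞) (v ∘ eg g) * ofM v) :=
    fun g => (mInd.comp (hcomp_meas g)).mul mofM
  have hcard : (Fintype.card (Fin n → Equiv.Perm (Fin 3)) : ℝ≥0∞) = (6 : ℝ≥0∞) ^ n := by
    rw [Fintype.card_fun, Fintype.card_fin]
    have : Fintype.card (Equiv.Perm (Fin 3)) = 6 := by
      rw [Fintype.card_perm, Fintype.card_fin]; rfl
    rw [this]; push_cast; ring
  have h1 : (6 : ℝ≥0∞) ^ n * ∫⁻ v, ofM v ∂P ≤ 9 * ((6 : ℝ≥0∞) ^ n * ∫⁻ v, G v ∂P) := by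
    calc (6 : ℝ≥0∞) ^ n * ∫⁻ v, ofM v ∂P
        = ∫⁻ v, (6 : ℝ≥0∞) ^ n * ofM v ∂P := (lintegral_const_mul _ mofM).symm
      _ ≤ ∫⁻ v, 9 * ∑ g : Fin n → Equiv.Perm (Fin 3),
            ((Aset n).indicator (1 : (Fin 3 × Fin n → ℝ) → ℝ≥0∞) (v ∘ eg g) * ofM v) ∂P :=
          lintegral_mono_ae hpt
      _ = 9 * ∫⁻ v, ∑ g : Fin n → Equiv.Perm (Fin 3),
            ((Aset n).indicator (1 : (Fin 3 × Fin n → ℝ) → ℝ≥0∞) (v ∘ eg g) * ofM v) ∂P :=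
          lintegral_const_mul _ (Finset.measurable_sum _ fun g _ => hmeas_each g)
      _ = 9 * ∑ g : Fin n → Equiv.Perm (Fin 3), ∫⁻ v,
            (Aset n).indicator (1 : (Fin 3 × Fin n → ℝ) → ℝ≥0∞) (v ∘ eg g) * ofM v ∂P := by
          rw [lintegral_finset_sum _ fun g _ => hmeas_each g]
      _ = 9 * ∑ _g : Fin n → Equiv.Perm (Fin 3), ∫⁻ v, G v ∂P := by
          rw [Finset.sum_congr rfl fun g _ => hinv g]
      _ = 9 * ((6 : ℝ≥0∞) ^ n * ∫⁻ v, G v ∂P) := by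
          rw [Finset.sum_const, Finset.card_univ, nsmul_eq_mul, hcard]
  have h6n0 : ((6 : ℝ≥0∞) ^ n) ≠ 0 := by positivity
  have h6nt : ((6 : ℝ≥0∞) ^ n) ≠ ⊤ := by
    exact ENNReal.pow_ne_top (by norm_num)
  have h2 : ∫⁻ v, ofM v ∂P ≤ 9 * ∫⁻ v, G v ∂P := by
    rw [show (9 : ℝ≥0∞) * ((6 : ℝ≥0∞) ^ n * ∫⁻ v, G v ∂P) =
        (6 : ℝ≥0∞) ^ n * (9 * ∫⁻ v, G v ∂P) by ring] at h1
    exact (ENNReal.mul_le_mul_iff_right h6n0 h6nt).1 h1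
  have h3 : ∫⁻ v, G v ∂P ≤ ∫⁻ v, ENNReal.ofReal (F n π v) ∂P := by
    refine lintegral_mono_ae (hpos.mono fun v hv => ?_)
    by_cases hA : v ∈ Aset n
    · simp only [hG, hofM, Set.indicator_of_mem hA, Pi.one_apply, one_mul]
      exact ENNReal.ofReal_le_ofReal (alg_ge hn π v hv hA)
    · simp [hG, Set.indicator_of_notMem hA]
  exact le_trans h2 (mul_le_mul_right h3 9)

end Stmt13Aux

open Stmt13Aux

/-- Competitiveness of the double-sample online stopping rule: it hires a
candidate whose expected value is at least `(1/9)·E[max_i X_i]`. -/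
theorem stmt_13 {Ω : Type*} [MeasurableSpace Ω] (μ : Measure Ω)
    [IsProbabilityMeasure μ]
    (n : ℕ) (hn : 0 < n) (X Y Z : Fin n → Ω → ℝ)
    (hmX : ∀ i, Measurable (X i)) (hmY : ∀ i, Measurable (Y i))
    (hmZ : ∀ i, Measurable (Z i))
    (hnonneg : ∀ᵐ ω ∂μ, ∀ i, 0 ≤ X i ω ∧ 0 ≤ Y i ω ∧ 0 ≤ Z i ω)
    (hindep : iIndepFun
      (fun (q : Fin 3 × Fin n) => ![X, Y, Z] q.1 q.2) μ)
    (hidY : ∀ i, IdentDistrib (X i) (Y i) μ μ)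
    (hidZ : ∀ i, IdentDistrib (X i) (Z i) μ μ)
    (hdistinct : ∀ᵐ ω ∂μ,
      Function.Injective (fun q : Fin 3 × Fin n => ![X, Y, Z] q.1 q.2 ω))
    (π : Equiv.Perm (Fin n))
    (hint : Integrable (fun ω => ⨆ i, X i ω) μ) :
    (1 / 9 : ℝ) * ∫ ω, (⨆ i, X i ω) ∂μ ≤
      ∫ ω, ∑ t : Fin n,
        (if ((⨆ i, Y i ω) < X (π t) ω ∧
             (∀ s : Fin n, s < t → X (π s) ω < ⨆ i, Y i ω) ∧
             (∀ s : Fin n, t ≤ s → Z (π s) ω < ⨆ i, Y i ω))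
         then X (π t) ω else 0) ∂μ := by
  haveI : Nonempty (Fin n) := ⟨⟨0, hn⟩⟩
  set V : Ω → (Fin 3 × Fin n → ℝ) := fun ω q => ![X, Y, Z] q.1 q.2 ω with hV
  have hmq : ∀ q : Fin 3 × Fin n, Measurable (![X, Y, Z] q.1 q.2) := by
    rintro ⟨r, i⟩
    fin_cases r
    · exact hmX i
    · exact hmY i
    · exact hmZ i
  have hVmeas : Measurable V := measurable_pi_lambda _ fun q => hmq q
  set ν : Fin 3 × Fin n → Measure ℝ := fun q => μ.map (![X, Y, Z] q.1 q.2) with hν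
  haveI : ∀ q, IsProbabilityMeasure (ν q) := fun q =>
    Measure.isProbabilityMeasure_map (hmq q).aemeasurable
  have hmap : μ.map V = Measure.pi ν :=
    map_eq_pi μ (fun q : Fin 3 × Fin n => ![X, Y, Z] q.1 q.2) hmq hindep
  have hcol : ∀ (r r' : Fin 3) (i : Fin n), ν (r, i) = ν (r', i) := by
    have e0 : ∀ (r : Fin 3) (i : Fin n), ν (r, i) = μ.map (X i) := by
      intro r i
      fin_cases r
      · rfl
      · exact ((hidY i).map_eq).symm
      · exact ((hidZ i).map_eq).symm
    intro r r' i; rw [e0, e0]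
  -- transfer a.e. statements
  have hposP : ∀ᵐ v ∂Measure.pi ν, ∀ q, 0 ≤ v q := by
    rw [← hmap]
    have hset : MeasurableSet {v : Fin 3 × Fin n → ℝ | ∀ q, 0 ≤ v q} := by
      have : {v : Fin 3 × Fin n → ℝ | ∀ q, 0 ≤ v q} =
          ⋂ q, {v : Fin 3 × Fin n → ℝ | 0 ≤ v q} := by
        ext v; simp [Set.mem_iInter]
      rw [this]
      exact MeasurableSet.iInter fun q =>
        measurableSet_le measurable_const (measurable_pi_apply q)
    refine (MeasureTheory.ae_map_iff hVmeas.aemeasurable hset).2 ?_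
    refine hnonneg.mono fun ω h => ?_
    rintro ⟨r, i⟩
    fin_cases r
    · exact (h i).1
    · exact (h i).2.1
    · exact (h i).2.2
  have hinjP : ∀ᵐ v ∂Measure.pi ν, Function.Injective v := by
    rw [← hmap]
    have hset : MeasurableSet {v : Fin 3 × Fin n → ℝ | Function.Injective v} := by
      have : {v : Fin 3 × Fin n → ℝ | Function.Injective v} =
          ⋂ q, ⋂ q', {v : Fin 3 × Fin n → ℝ | v q = v q' → q = q'} := by
        ext v
        simp only [Set.mem_setOf_eq, Set.mem_iInter]
        exact ⟨fun h q q' => fun he => h he, fun h a b he => h a b he⟩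
      rw [this]
      refine MeasurableSet.iInter fun q => MeasurableSet.iInter fun q' => ?_
      by_cases hqq : q = q'
      · have : {v : Fin 3 × Fin n → ℝ | v q = v q' → q = q'} = Set.univ := by
          ext v; simp [hqq]
        rw [this]; exact MeasurableSet.univ
      · have : {v : Fin 3 × Fin n → ℝ | v q = v q' → q = q'} =
            {v : Fin 3 × Fin n → ℝ | v q = v q'}ᶜ := by
          ext v; simp [hqq]
        rw [this]
        exact (measurableSet_eq_fun (measurable_pi_apply q) (measurable_pi_apply q')).compl
    exact (MeasureTheory.ae_map_iff hVmeas.aemeasurable hset).2 hdistinct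
  -- rewrite the two integrands through V
  have hFV : ∀ ω, (∑ t : Fin n,
      (if ((⨆ i, Y i ω) < X (π t) ω ∧
           (∀ s : Fin n, s < t → X (π s) ω < ⨆ i, Y i ω) ∧
           (∀ s : Fin n, t ≤ s → Z (π s) ω < ⨆ i, Y i ω))
       then X (π t) ω else 0)) = F n π (V ω) := fun ω => rfl
  have hMXV : ∀ ω, (⨆ i, X i ω) = ⨆ i, V ω ((0 : Fin 3), i) := fun ω => rfl
  -- integrability of the right-hand side
  have hXint : ∀ i, Integrable (X i) μ := by
    intro i
    refine hint.mono ((hmX i).aestronglyMeasurable) ?_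
    refine hnonneg.mono fun ω h => ?_
    have hb : BddAbove (Set.range fun j => X j ω) := (Set.finite_range _).bddAbove
    have h1 : X i ω ≤ ⨆ j, X j ω := le_ciSup hb i
    have h2 : 0 ≤ X i ω := (h i).1
    rw [Real.norm_eq_abs, Real.norm_eq_abs, abs_of_nonneg h2, abs_of_nonneg (le_trans h2 h1)]
    exact h1
  have hsumint : Integrable (fun ω => ∑ t : Fin n, X (π t) ω) μ :=
    integrable_finset_sum _ fun t _ => hXint (π t)
  have hRHSmeas : Measurable (fun ω => ∑ t : Fin n,
      (if ((⨆ i, Y i ω) < X (π t) ω ∧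
           (∀ s : Fin n, s < t → X (π s) ω < ⨆ i, Y i ω) ∧
           (∀ s : Fin n, t ≤ s → Z (π s) ω < ⨆ i, Y i ω))
       then X (π t) ω else 0)) := by
    have : (fun ω => ∑ t : Fin n,
        (if ((⨆ i, Y i ω) < X (π t) ω ∧
             (∀ s : Fin n, s < t → X (π s) ω < ⨆ i, Y i ω) ∧
             (∀ s : Fin n, t ≤ s → Z (π s) ω < ⨆ i, Y i ω))
         then X (π t) ω else 0)) = (F n π) ∘ V := funext fun ω => hFV ω
    rw [this]
    exact (mF π).comp hVmeas
  have hRHSint : Integrable (fun ω => ∑ t : Fin n,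
      (if ((⨆ i, Y i ω) < X (π t) ω ∧
           (∀ s : Fin n, s < t → X (π s) ω < ⨆ i, Y i ω) ∧
           (∀ s : Fin n, t ≤ s → Z (π s) ω < ⨆ i, Y i ω))
       then X (π t) ω else 0)) μ := by
    refine hsumint.mono hRHSmeas.aestronglyMeasurable ?_
    refine hnonneg.mono fun ω h => ?_
    have hterm_nonneg : ∀ t : Fin n, (0 : ℝ) ≤
        (if ((⨆ i, Y i ω) < X (π t) ω ∧
             (∀ s : Fin n, s < t → X (π s) ω < ⨆ i, Y i ω) ∧
             (∀ s : Fin n, t ≤ s → Z (π s) ω < ⨆ i, Y i ω))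
         then X (π t) ω else 0) := by
      intro t; split_ifs
      · exact (h (π t)).1
      · exact le_refl 0
    have hterm_le : ∀ t : Fin n,
        (if ((⨆ i, Y i ω) < X (π t) ω ∧
             (∀ s : Fin n, s < t → X (π s) ω < ⨆ i, Y i ω) ∧
             (∀ s : Fin n, t ≤ s → Z (π s) ω < ⨆ i, Y i ω))
         then X (π t) ω else 0) ≤ X (π t) ω := by
      intro t; split_ifs
      · exact le_refl _
      · exact (h (π t)).1
    rw [Real.norm_eq_abs, Real.norm_eq_abs,
      abs_of_nonneg (Finset.sum_nonneg fun t _ => hterm_nonneg t),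
      abs_of_nonneg (Finset.sum_nonneg fun t _ => (h (π t)).1)]
    exact Finset.sum_le_sum fun t _ => hterm_le t
  -- nonnegativity of the integrands
  have hRHSnonneg : 0 ≤ᵐ[μ] (fun ω => ∑ t : Fin n,
      (if ((⨆ i, Y i ω) < X (π t) ω ∧
           (∀ s : Fin n, s < t → X (π s) ω < ⨆ i, Y i ω) ∧
           (∀ s : Fin n, t ≤ s → Z (π s) ω < ⨆ i, Y i ω))
       then X (π t) ω else 0)) := by
    refine hnonneg.mono fun ω h => ?_
    refine Finset.sum_nonneg fun t _ => ?_
    split_ifs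
    · exact (h (π t)).1
    · exact le_refl 0
  have hmaxmeas : Measurable (fun ω => ⨆ i, X i ω) := Measurable.iSup hmX
  have hmaxnonneg : 0 ≤ᵐ[μ] (fun ω => ⨆ i, X i ω) := by
    refine hnonneg.mono fun ω h => ?_
    have hb : BddAbove (Set.range fun j => X j ω) := (Set.finite_range _).bddAbove
    exact le_trans (h ⟨0, hn⟩).1 (le_ciSup hb ⟨0, hn⟩)
  rw [integral_eq_lintegral_of_nonneg_ae hmaxnonneg hmaxmeas.aestronglyMeasurable,
    integral_eq_lintegral_of_nonneg_ae hRHSnonneg hRHSmeas.aestronglyMeasurable]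
  set R := ∫⁻ ω, ENNReal.ofReal (∑ t : Fin n,
      (if ((⨆ i, Y i ω) < X (π t) ω ∧
           (∀ s : Fin n, s < t → X (π s) ω < ⨆ i, Y i ω) ∧
           (∀ s : Fin n, t ≤ s → Z (π s) ω < ⨆ i, Y i ω))
       then X (π t) ω else 0)) ∂μ with hR
  set L := ∫⁻ ω, ENNReal.ofReal (⨆ i, X i ω) ∂μ with hL
  have hRtop : R ≠ ⊤ := hRHSint.lintegral_lt_top.ne
  have hLR : L ≤ 9 * R := by
    have hmean_meas : Measurable (fun v : Fin 3 × Fin n → ℝ =>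
        ENNReal.ofReal (⨆ i, v ((0 : Fin 3), i))) :=
      ENNReal.measurable_ofReal.comp (Measurable.iSup fun i => measurable_pi_apply _)
    have hL1 : L = ∫⁻ v, ENNReal.ofReal (⨆ i, v ((0 : Fin 3), i)) ∂Measure.pi ν := by
      rw [hL, ← hmap, lintegral_map hmean_meas hVmeas]
      rfl
    have hR1 : R = ∫⁻ v, ENNReal.ofReal (F n π v) ∂Measure.pi ν := by
      rw [hR, ← hmap, lintegral_map (mF π).ennreal_ofReal hVmeas]
      exact lintegral_congr fun ω => by rw [hFV ω]
    have hstep : ∫⁻ v, ENNReal.ofReal (⨆ i, v ((0 : Fin 3), i)) ∂Measure.pi ν ≤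
        ∫⁻ v, ENNReal.ofReal (Mx n v) ∂Measure.pi ν := by
      refine lintegral_mono fun v => ENNReal.ofReal_le_ofReal ?_
      refine ciSup_le fun i => ?_
      exact le_ciSup (Set.finite_range v).bddAbove ((0 : Fin 3), i)
    rw [hL1, hR1]
    exact le_trans hstep (key hn π ν hcol hposP hinjP)
  have h9 : (9 : ℝ≥0∞) * R ≠ ⊤ := ENNReal.mul_ne_top (by norm_num) hRtop
  have hmono := ENNReal.toReal_mono h9 hLR
  rw [ENNReal.toReal_mul] at hmono
  have h9r : ((9 : ℝ≥0∞)).toReal = 9 := by norm_num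
  rw [h9r] at hmono
  linarith
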